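/- If a sequence of agent-turns is recursively balanced (at every prefix, the number of turns of any two agents differs by at most 1), and all agents have strictly positive additive utilities, then the sequential allocation in which each agent on their turn picks a most-preferred remaining item produces an allocation p such that for all agents i, j there exists an item o with u_i(p(i)) ≥ u_i(p(j) \ {o}); that is, the allocation is EF1. -/

import Mathlib

open Finset

/-- Sequential allocation: each agent on their turn picks a remaining item of maximal utility. -/
def seqValid {A O : Type*} [DecidableEq O] (u : A → O → ℝ) :
    List A → List O → Finset O → Prop
  | [], [], _ => True
  | a :: s, o :: ps, rem =>
      o ∈ rem ∧ (∀ o' ∈ rem, u a o' ≤ u a o) ∧ seqValid u s ps (rem.erase o)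
  | _, _, _ => False

/-- The bundle of items picked by agent `i` in the run `(seq, picks)`. -/
def bundleOf {A O : Type*} [DecidableEq A] [DecidableEq O]
    (seq : List A) (picks : List O) (i : A) : Finset O :=
  ((seq.zip picks).filterMap (fun x => if x.1 = i then some x.2 else none)).toFinset

/-- A sequence of turns is recursively balanced if at every prefix the numbers of turns of
any two agents differ by at most one. -/
def RecBalanced {A : Type*} [DecidableEq A] (seq : List A) : Prop :=
  ∀ k : ℕ, ∀ i j : A, (seq.take k).count i ≤ (seq.take k).count j + 1

namespace EF1Aux

variable {A O : Type*} [DecidableEq A] [DecidableEq O]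

/-- The list of items picked by agent `i`, in order. -/
def pickList (seq : List A) (picks : List O) (i : A) : List O :=
  (seq.zip picks).filterMap (fun x => if x.1 = i then some x.2 else none)

lemma bundleOf_eq (seq : List A) (picks : List O) (i : A) :
    bundleOf seq picks i = (pickList seq picks i).toFinset := rfl

lemma pickList_nil (picks : List O) (i : A) : pickList ([] : List A) picks i = [] := rfl

lemma pickList_cons (a : A) (s : List A) (o : O) (ps : List O) (i : A) :
    pickList (a :: s) (o :: ps) i =
      if a = i then o :: pickList s ps i else pickList s ps i := by
  simp only [pickList, List.zip_cons_cons, List.filterMap_cons]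
  split_ifs <;> rfl

lemma pickList_sublist : ∀ (seq : List A) (picks : List O) (i : A),
    List.Sublist (pickList seq picks i) picks
  | [], ps, i => by simp [pickList_nil]
  | a :: s, [], i => by simp [pickList]
  | a :: s, o :: ps, i => by
      rw [pickList_cons]
      split_ifs
      · exact (pickList_sublist s ps i).cons₂ o
      · exact (pickList_sublist s ps i).cons o

lemma seqValid_subset {u : A → O → ℝ} : ∀ (seq : List A) (picks : List O) (rem : Finset O),
    seqValid u seq picks rem → ∀ o ∈ picks, o ∈ rem
  | [], [], rem, _ => by simp
  | [], o :: ps, rem, h => h.elim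
  | a :: s, [], rem, h => h.elim
  | a :: s, o :: ps, rem, h => by
      obtain ⟨ho, _, htail⟩ := h
      intro x hx
      rcases List.mem_cons.mp hx with rfl | hx
      · exact ho
      · exact Finset.mem_of_mem_erase (seqValid_subset s ps _ htail x hx)

lemma seqValid_nodup {u : A → O → ℝ} : ∀ (seq : List A) (picks : List O) (rem : Finset O),
    seqValid u seq picks rem → picks.Nodup
  | [], [], rem, _ => List.nodup_nil
  | [], o :: ps, rem, h => h.elim
  | a :: s, [], rem, h => h.elim
  | a :: s, o :: ps, rem, h => by
      obtain ⟨ho, _, htail⟩ := h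
      refine List.nodup_cons.mpr ⟨fun hmem => ?_, seqValid_nodup s ps _ htail⟩
      exact (Finset.notMem_erase o rem) (seqValid_subset s ps _ htail o hmem)

/-- Key lemma: if in every prefix agent `j` picks at most `c` more times than agent `i`,
then the items of `j`'s bundle after dropping the first `c` are, in total `u i` value,
at most `i`'s bundle value. -/
lemma key {u : A → O → ℝ} (hpos : ∀ i o, 0 < u i o) :
    ∀ (seq : List A) (picks : List O) (rem : Finset O), seqValid u seq picks rem →
    ∀ (i j : A), i ≠ j → ∀ c : ℕ,
    (∀ k, (seq.take k).count j ≤ (seq.take k).count i + c) →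
    (((pickList seq picks j).drop c).map (u i)).sum ≤ ((pickList seq picks i).map (u i)).sum
  | [], [], rem, _ => by intro i j _ c _; simp [pickList_nil]
  | [], o :: ps, rem, h => h.elim
  | a :: s, [], rem, h => h.elim
  | a :: s, o :: ps, rem, h => by
      obtain ⟨ho, hmax, htail⟩ := h
      intro i j hij c hbal
      by_cases hai : a = i
      · subst hai
        have hne : ¬ (a = j) := fun hh => hij hh
        rw [pickList_cons, pickList_cons, if_pos rfl, if_neg hne]
        have hbal' : ∀ k, (s.take k).count j ≤ (s.take k).count a + (c + 1) := by
          intro k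
          have := hbal (k + 1)
          rw [List.take_succ_cons, List.count_cons_of_ne (fun hh : a = j => hne hh),
            List.count_cons_self] at this
          omega
        have IH := key hpos s ps _ htail a j hij (c + 1) hbal'
        by_cases hc : c < (pickList s ps j).length
        · rw [List.drop_eq_getElem_cons hc]
          simp only [List.map_cons, List.sum_cons]
          have hmem : (pickList s ps j)[c] ∈ rem := by
            refine Finset.mem_of_mem_erase (seqValid_subset s ps _ htail _ ?_)
            exact (pickList_sublist s ps j).subset (List.getElem_mem hc)
          have := hmax _ hmem
          linarith [IH]
        · rw [List.drop_eq_nil_of_le (le_of_not_gt hc)]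
          simp only [List.map_nil, List.sum_nil, List.map_cons, List.sum_cons]
          have h1 : (0:ℝ) ≤ ((pickList s ps a).map (u a)).sum := by
            apply List.sum_nonneg
            intro x hx
            obtain ⟨y, _, rfl⟩ := List.mem_map.mp hx
            exact (hpos a y).le
          linarith [hpos a o]
      · by_cases haj : a = j
        · subst haj
          have hc1 : 1 ≤ c := by
            have := hbal 1
            rw [List.take_succ_cons, List.take_zero, List.count_cons_self,
              List.count_cons_of_ne (fun hh : a = i => hai hh)] at this
            simp only [List.count_nil] at this
            omega
          obtain ⟨c', rfl⟩ : ∃ c', c = c' + 1 := ⟨c - 1, by omega⟩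
          rw [pickList_cons, pickList_cons, if_pos rfl, if_neg hai]
          rw [List.drop_succ_cons]
          have hbal' : ∀ k, (s.take k).count a ≤ (s.take k).count i + c' := by
            intro k
            have := hbal (k + 1)
            rw [List.take_succ_cons, List.count_cons_self,
              List.count_cons_of_ne (fun hh : a = i => hai hh)] at this
            omega
          exact key hpos s ps _ htail i a hij c' hbal'
        · rw [pickList_cons, pickList_cons, if_neg hai, if_neg haj]
          have hbal' : ∀ k, (s.take k).count j ≤ (s.take k).count i + c := by
            intro k
            have := hbal (k + 1)
            rw [List.take_succ_cons, List.count_cons_of_ne (fun hh : a = j => haj hh),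
              List.count_cons_of_ne (fun hh : a = i => hai hh)] at this
            omega
          exact key hpos s ps _ htail i j hij c hbal'

end EF1Aux

/-- Sequential allocation along any recursively balanced picking sequence, with strictly
positive additive utilities, yields an EF1 allocation. -/
theorem stmt1 {n : ℕ} {O : Type*} [Fintype O] [DecidableEq O]
    (u : Fin n → O → ℝ) (hpos : ∀ i o, 0 < u i o)
    (seq : List (Fin n)) (hRB : RecBalanced seq)
    (picks : List O) (hvalid : seqValid u seq picks Finset.univ) :
    ∀ i j : Fin n, ∃ O' ⊆ bundleOf seq picks j, O'.card ≤ 1 ∧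
      ∑ o ∈ bundleOf seq picks j \ O', u i o ≤ ∑ o ∈ bundleOf seq picks i, u i o := by
  intro i j
  by_cases hij : i = j
  · subst hij
    exact ⟨∅, Finset.empty_subset _, by simp, by simp⟩
  · set Pi := EF1Aux.pickList seq picks i with hPi
    set Pj := EF1Aux.pickList seq picks j with hPj
    have hnodup : picks.Nodup := EF1Aux.seqValid_nodup seq picks _ hvalid
    have hPiN : Pi.Nodup := (EF1Aux.pickList_sublist seq picks i).nodup hnodup
    have hPjN : Pj.Nodup := (EF1Aux.pickList_sublist seq picks j).nodup hnodup
    refine ⟨(Pj.take 1).toFinset, ?_, ?_, ?_⟩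
    · rw [EF1Aux.bundleOf_eq]
      exact fun x hx => List.mem_toFinset.mpr
        ((List.take_sublist 1 Pj).subset (List.mem_toFinset.mp hx))
    · exact le_trans (List.toFinset_card_le _) (by simp [List.length_take])
    · have hsd : bundleOf seq picks j \ (Pj.take 1).toFinset = (Pj.drop 1).toFinset := by
        rw [EF1Aux.bundleOf_eq]
        ext x
        simp only [Finset.mem_sdiff, List.mem_toFinset]
        constructor
        · rintro ⟨hx, hnx⟩
          have hx' : x ∈ List.take 1 Pj ++ List.drop 1 Pj := by
            rw [List.take_append_drop]; exact hx
          rcases List.mem_append.mp hx' with h | h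
          · exact absurd h hnx
          · exact h
        · intro hx
          refine ⟨(List.drop_sublist 1 Pj).subset hx, fun hx' => ?_⟩
          exact (List.disjoint_take_drop hPjN le_rfl) hx' hx
      rw [hsd, List.sum_toFinset _ (hPjN.sublist (List.drop_sublist 1 Pj)),
        EF1Aux.bundleOf_eq, List.sum_toFinset _ hPiN]
      exact EF1Aux.key hpos seq picks _ hvalid i j hij 1 (fun k => hRB k j i)
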